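/- Recovery of the dual solution for the subproblem (Proposition 2, attainment part): let S ⊆ {1,…,n} be an index set. If x* attains the primal infimum p(S) and (α*, β_v*, β_h*) attains the dual supremum d(S), then α* = y − A x*. -/

import Mathlib

open Matrix BigOperators Pointwise
set_option maxHeartbeats 1000000

lemma my_cs2 (a b c d : ℝ) : a*c + b*d ≤ Real.sqrt (a^2+b^2) * Real.sqrt (c^2+d^2) := by
  have h1 : a*c + b*d ≤ Real.sqrt ((a*c+b*d)^2) := by
    rw [Real.sqrt_sq_eq_abs]; exact le_abs_self _
  refine h1.trans ?_
  rw [← Real.sqrt_mul (by positivity)]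
  exact Real.sqrt_le_sqrt (by nlinarith [sq_nonneg (a*d - b*c)])

lemma my_sqrt_smul (t a b : ℝ) (ht : 0 ≤ t) :
    Real.sqrt ((t*a)^2 + (t*b)^2) = t * Real.sqrt (a^2+b^2) := by
  rw [show (t*a)^2 + (t*b)^2 = t^2 * (a^2+b^2) by ring, Real.sqrt_mul (sq_nonneg t),
    Real.sqrt_sq ht]

lemma my_sqrt_tri (a b c d : ℝ) :
    Real.sqrt ((a+c)^2+(b+d)^2) ≤ Real.sqrt (a^2+b^2) + Real.sqrt (c^2+d^2) := by
  have h := my_cs2 a b c d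
  have e1 : Real.sqrt (a^2+b^2) ^ 2 = a^2+b^2 := Real.sq_sqrt (by positivity)
  have e2 : Real.sqrt (c^2+d^2) ^ 2 = c^2+d^2 := Real.sq_sqrt (by positivity)
  have key : (a+c)^2+(b+d)^2 ≤ (Real.sqrt (a^2+b^2) + Real.sqrt (c^2+d^2))^2 := by nlinarith
  calc Real.sqrt ((a+c)^2+(b+d)^2)
      ≤ Real.sqrt ((Real.sqrt (a^2+b^2) + Real.sqrt (c^2+d^2))^2) := Real.sqrt_le_sqrt key
    _ = _ := Real.sqrt_sq (by positivity)

lemma my_lim_aux {a b c : ℝ} (h : ∀ t : ℝ, 0 < t → t ≤ 1 → a ≤ b + t*c) : a ≤ b := by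
  by_contra h'
  push_neg at h'
  rcases le_or_gt c 0 with hc | hc
  · have := h 1 one_pos le_rfl; linarith
  · have hab : 0 < a - b := by linarith
    have ht0 : 0 < min 1 ((a-b)/(2*c)) := lt_min one_pos (by positivity)
    have := h _ ht0 (min_le_left _ _)
    have h2 : min 1 ((a-b)/(2*c)) * c ≤ ((a-b)/(2*c)) * c :=
      mul_le_mul_of_nonneg_right (min_le_right _ _) hc.le
    have h3 : ((a-b)/(2*c)) * c = (a-b)/2 := by field_simp
    linarith

lemma my_dot {n : ℕ} (M : Matrix (Fin n) (Fin n) ℝ) (z w : Fin n → ℝ) :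
    ∑ i, (Mᵀ.mulVec z) i * w i = ∑ i, z i * (M.mulVec w) i := by
  have h : (Mᵀ.mulVec z) ⬝ᵥ w = z ⬝ᵥ (M.mulVec w) := by
    rw [dotProduct_mulVec, mulVec_transpose]
  simpa [dotProduct] using h

lemma my_dual_cert {n : ℕ} (Dv Dh : Matrix (Fin n) (Fin n) ℝ) {lam : ℝ} (hlam : 0 < lam)
    (S : Finset (Fin n)) (v : Fin n → ℝ)
    (hv : ∀ w : Fin n → ℝ, (∀ i, i ∉ S → Dv.mulVec w i = 0 ∧ Dh.mulVec w i = 0) →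
      ∑ i, v i * w i ≤ lam * ∑ i ∈ S, Real.sqrt ((Dv.mulVec w i)^2 + (Dh.mulVec w i)^2)) :
    ∃ bv bh : Fin n → ℝ, v = Dvᵀ.mulVec bv + Dhᵀ.mulVec bh
      ∧ ∀ i ∈ S, Real.sqrt ((bv i)^2 + (bh i)^2) ≤ lam := by
  classical
  set T : ((Fin n → ℝ) × (Fin n → ℝ)) →ₗ[ℝ] (Fin n → ℝ) :=
    { toFun := fun p => Dvᵀ.mulVec p.1 + Dhᵀ.mulVec p.2
      map_add' := by
        intro p q
        simp only [Prod.fst_add, Prod.snd_add, mulVec_add]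
        abel
      map_smul' := by
        intro c p
        simp only [Prod.smul_fst, Prod.smul_snd, mulVec_smul, smul_add, RingHom.id_apply] } with hT
  set Bc : Set ((Fin n → ℝ) × (Fin n → ℝ)) :=
    {p | ∀ i, (i ∈ S → Real.sqrt ((p.1 i)^2 + (p.2 i)^2) ≤ lam)
        ∧ (i ∉ S → p.1 i = 0 ∧ p.2 i = 0)} with hBc
  set Msub : Submodule ℝ ((Fin n → ℝ) × (Fin n → ℝ)) :=
    { carrier := {p | ∀ i ∈ S, p.1 i = 0 ∧ p.2 i = 0}
      add_mem' := by
        intro p q hp hq i hi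
        have h1 := hp i hi; have h2 := hq i hi
        simp [h1.1, h1.2, h2.1, h2.2]
      zero_mem' := by intro i _; simp
      smul_mem' := by
        intro c p hp i hi
        have h1 := hp i hi
        simp [h1.1, h1.2] } with hMsub
  set C : Set (Fin n → ℝ) := (T '' Bc) + (Submodule.map T Msub : Set (Fin n → ℝ)) with hC
  have mem_C : ∀ bv bh : Fin n → ℝ, (∀ i ∈ S, Real.sqrt ((bv i)^2+(bh i)^2) ≤ lam) →
      Dvᵀ.mulVec bv + Dhᵀ.mulVec bh ∈ C := by
    intro bv bh hfeas
    set bv1 : Fin n → ℝ := fun i => if i ∈ S then bv i else 0 with hbv1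
    set bh1 : Fin n → ℝ := fun i => if i ∈ S then bh i else 0 with hbh1
    have hsplit : Dvᵀ.mulVec bv + Dhᵀ.mulVec bh
        = T (bv1, bh1) + T (bv - bv1, bh - bh1) := by
      show _ = (Dvᵀ.mulVec bv1 + Dhᵀ.mulVec bh1) + (Dvᵀ.mulVec (bv - bv1) + Dhᵀ.mulVec (bh - bh1))
      rw [Matrix.mulVec_sub, Matrix.mulVec_sub]
      abel
    rw [hsplit]
    refine Set.add_mem_add ⟨(bv1, bh1), ?_, rfl⟩ ⟨(bv - bv1, bh - bh1), ?_, rfl⟩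
    · intro i
      constructor
      · intro hi
        simpa [hbv1, hbh1, hi] using hfeas i hi
      · intro hi
        simp [hbv1, hbh1, hi]
    · intro i hi
      simp [hbv1, hbh1, hi]
  -- closedness of Bc
  have hBcclosed : IsClosed Bc := by
    have hrw : Bc = ⋂ i, ((fun p : (Fin n → ℝ) × (Fin n → ℝ) => (p.1 i, p.2 i)) ⁻¹'
        (if i ∈ S then {q : ℝ × ℝ | Real.sqrt (q.1^2 + q.2^2) ≤ lam}
          else {q : ℝ × ℝ | q.1 = 0 ∧ q.2 = 0})) := by
      ext p
      simp only [hBc, Set.mem_setOf_eq, Set.mem_iInter, Set.mem_preimage]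
      constructor
      · intro h i
        by_cases hi : i ∈ S
        · simpa [hi] using (h i).1 hi
        · simpa [hi] using (h i).2 hi
      · intro h i
        constructor
        · intro hi; have := h i; simpa [hi] using this
        · intro hi; have := h i; simpa [hi] using this
    rw [hrw]
    refine isClosed_iInter fun i => IsClosed.preimage
      (((continuous_apply i).comp continuous_fst).prodMk
        ((continuous_apply i).comp continuous_snd)) ?_
    by_cases hi : i ∈ S
    · simp only [hi, if_true]
      exact isClosed_le (Real.continuous_sqrt.comp
        ((continuous_fst.pow 2).add (continuous_snd.pow 2))) continuous_const
    · simp only [hi, if_false]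
      exact (isClosed_eq continuous_fst continuous_const).inter
        (isClosed_eq continuous_snd continuous_const)
  have habs : ∀ a b : ℝ, |a| ≤ Real.sqrt (a^2 + b^2) := by
    intro a b
    rw [← Real.sqrt_sq_eq_abs]
    exact Real.sqrt_le_sqrt (by nlinarith [sq_nonneg b])
  have hBcbdd : Bc ⊆ (Set.univ.pi fun _ : Fin n => Set.Icc (-lam) lam) ×ˢ
      (Set.univ.pi fun _ : Fin n => Set.Icc (-lam) lam) := by
    intro p hp
    have hcoord : ∀ i, |p.1 i| ≤ lam ∧ |p.2 i| ≤ lam := by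
      intro i
      by_cases hi : i ∈ S
      · have h1 := (hp i).1 hi
        constructor
        · exact (habs (p.1 i) (p.2 i)).trans h1
        · refine le_trans ?_ h1
          rw [← Real.sqrt_sq_eq_abs]
          exact Real.sqrt_le_sqrt (by nlinarith [sq_nonneg (p.1 i)])
      · have h1 := (hp i).2 hi
        simp [h1.1, h1.2, hlam.le]
    constructor
    · intro i _
      exact abs_le.mp (hcoord i).1
    · intro i _
      exact abs_le.mp (hcoord i).2
  have hBccomp : IsCompact Bc :=
    (((isCompact_univ_pi fun _ => isCompact_Icc).prod
      (isCompact_univ_pi fun _ => isCompact_Icc))).of_isClosed_subset hBcclosed hBcbdd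
  have hTcont : Continuous T := T.continuous_of_finiteDimensional
  have hCclosed : IsClosed C :=
    IsClosed.add_left_of_isCompact (Submodule.closed_of_finiteDimensional _)
      (hBccomp.image hTcont)
  have hBcconvex : Convex ℝ Bc := by
    intro p hp q hq a b ha hb hab
    intro i
    constructor
    · intro hi
      have h1 := (hp i).1 hi
      have h2 := (hq i).1 hi
      show Real.sqrt (((a • p + b • q).1 i)^2 + ((a • p + b • q).2 i)^2) ≤ lam
      have e1 : (a • p + b • q).1 i = a * p.1 i + b * q.1 i := rfl
      have e2 : (a • p + b • q).2 i = a * p.2 i + b * q.2 i := rfl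
      rw [e1, e2]
      calc Real.sqrt ((a * p.1 i + b * q.1 i)^2 + (a * p.2 i + b * q.2 i)^2)
          ≤ Real.sqrt ((a * p.1 i)^2 + (a * p.2 i)^2)
            + Real.sqrt ((b * q.1 i)^2 + (b * q.2 i)^2) := my_sqrt_tri _ _ _ _
        _ = a * Real.sqrt ((p.1 i)^2 + (p.2 i)^2)
            + b * Real.sqrt ((q.1 i)^2 + (q.2 i)^2) := by
            rw [my_sqrt_smul _ _ _ ha, my_sqrt_smul _ _ _ hb]
        _ ≤ a * lam + b * lam := by
            exact add_le_add (mul_le_mul_of_nonneg_left h1 ha)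
              (mul_le_mul_of_nonneg_left h2 hb)
        _ = lam := by rw [← add_mul, hab, one_mul]
    · intro hi
      have h1 := (hp i).2 hi
      have h2 := (hq i).2 hi
      constructor
      · show a * p.1 i + b * q.1 i = 0
        rw [h1.1, h2.1]; ring
      · show a * p.2 i + b * q.2 i = 0
        rw [h1.2, h2.2]; ring
  have hCconvex : Convex ℝ C := (hBcconvex.linear_image T).add (Submodule.convex _)
  suffices hvC : v ∈ C by
    obtain ⟨c1, ⟨p1, hp1, rfl⟩, c2, hc2, rfl⟩ := hvC
    obtain ⟨p2, hp2, rfl⟩ := hc2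
    refine ⟨p1.1 + p2.1, p1.2 + p2.2, ?_, ?_⟩
    · show T p1 + T p2 = _
      show (Dvᵀ.mulVec p1.1 + Dhᵀ.mulVec p1.2) + (Dvᵀ.mulVec p2.1 + Dhᵀ.mulVec p2.2) = _
      rw [Matrix.mulVec_add, Matrix.mulVec_add]
      abel
    · intro i hi
      have h1 := (hp1 i).1 hi
      have h2 := hp2 i hi
      simpa [Pi.add_apply, h2.1, h2.2] using h1
  by_contra hvC
  obtain ⟨f, u, hfa, hfv⟩ := geometric_hahn_banach_closed_point hCconvex hCclosed hvC
  set w : Fin n → ℝ := fun i => f (Pi.single i 1) with hw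
  have f_eq : ∀ z : Fin n → ℝ, f z = ∑ i, z i * w i := by
    intro z
    have hz : (∑ i, (z i) • (Pi.single i (1:ℝ) : Fin n → ℝ)) = z := by
      ext j
      simp [Finset.sum_apply, Pi.single_apply]
    calc f z = f (∑ i, (z i) • (Pi.single i (1:ℝ) : Fin n → ℝ)) := by rw [hz]
      _ = ∑ i, f ((z i) • (Pi.single i (1:ℝ) : Fin n → ℝ)) := map_sum f _ _
      _ = ∑ i, z i * w i := by
          refine Finset.sum_congr rfl fun i _ => ?_
          rw [f.map_smul, smul_eq_mul]
  have f_T : ∀ bv bh : Fin n → ℝ, f (Dvᵀ.mulVec bv + Dhᵀ.mulVec bh)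
      = ∑ i, (bv i * Dv.mulVec w i + bh i * Dh.mulVec w i) := by
    intro bv bh
    rw [f_eq]
    calc ∑ i, (Dvᵀ.mulVec bv + Dhᵀ.mulVec bh) i * w i
        = ∑ i, ((Dvᵀ.mulVec bv) i * w i + (Dhᵀ.mulVec bh) i * w i) :=
          Finset.sum_congr rfl fun i _ => by simp [add_mul]
      _ = (∑ i, (Dvᵀ.mulVec bv) i * w i) + ∑ i, (Dhᵀ.mulVec bh) i * w i :=
          Finset.sum_add_distrib
      _ = (∑ i, bv i * (Dv.mulVec w) i) + ∑ i, bh i * (Dh.mulVec w) i := by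
          rw [my_dot, my_dot]
      _ = ∑ i, (bv i * (Dv.mulVec w) i + bh i * (Dh.mulVec w) i) :=
          Finset.sum_add_distrib.symm
  have key0 : ∀ (c : ℝ), (∀ t : ℝ, t * c < u) → c = 0 := by
    intro c h
    by_contra hc
    have h1 := h ((u + |c|)/c)
    rw [div_mul_cancel₀ _ hc] at h1
    have h2 : |c| > 0 := abs_pos.mpr hc
    linarith
  have feas_w : ∀ i, i ∉ S → Dv.mulVec w i = 0 ∧ Dh.mulVec w i = 0 := by
    intro i hi
    constructor
    · apply key0
      intro t
      have hmem : Dvᵀ.mulVec (t • (Pi.single i (1:ℝ) : Fin n → ℝ)) + Dhᵀ.mulVec (0 : Fin n → ℝ) ∈ C := by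
        apply mem_C
        intro j hj
        have hji : j ≠ i := fun h => hi (h ▸ hj)
        simp [Pi.single_apply, hji, hlam.le]
      have hlt := hfa _ hmem
      rw [f_T] at hlt
      have hsum : ∑ j, ((t • (Pi.single i (1:ℝ) : Fin n → ℝ)) j * (Dv.mulVec w) j
          + (0 : Fin n → ℝ) j * (Dh.mulVec w) j) = t * (Dv.mulVec w) i := by
        simp [Pi.single_apply, ite_mul]
      rwa [hsum] at hlt
    · apply key0
      intro t
      have hmem : Dvᵀ.mulVec (0 : Fin n → ℝ) + Dhᵀ.mulVec (t • (Pi.single i (1:ℝ) : Fin n → ℝ)) ∈ C := by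
        apply mem_C
        intro j hj
        have hji : j ≠ i := fun h => hi (h ▸ hj)
        simp [Pi.single_apply, hji, hlam.le]
      have hlt := hfa _ hmem
      rw [f_T] at hlt
      have hsum : ∑ j, ((0 : Fin n → ℝ) j * (Dv.mulVec w) j
          + (t • (Pi.single i (1:ℝ) : Fin n → ℝ)) j * (Dh.mulVec w) j) = t * (Dh.mulVec w) i := by
        simp [Pi.single_apply, ite_mul]
      rwa [hsum] at hlt
  set m : Fin n → ℝ := fun i => Real.sqrt ((Dv.mulVec w i)^2 + (Dh.mulVec w i)^2) with hm
  have hzero : ∀ i, m i = 0 → Dv.mulVec w i = 0 ∧ Dh.mulVec w i = 0 := by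
    intro i h0
    have h1 : (Dv.mulVec w i)^2 + (Dh.mulVec w i)^2 = 0 := by
      have := Real.sqrt_eq_zero'.mp h0
      nlinarith [sq_nonneg (Dv.mulVec w i), sq_nonneg (Dh.mulVec w i)]
    constructor <;> nlinarith [sq_nonneg (Dv.mulVec w i), sq_nonneg (Dh.mulVec w i)]
  set bv : Fin n → ℝ := fun i => if i ∈ S then lam * Dv.mulVec w i / m i else 0 with hbv
  set bh : Fin n → ℝ := fun i => if i ∈ S then lam * Dh.mulVec w i / m i else 0 with hbh
  have hfeasb : ∀ i ∈ S, Real.sqrt ((bv i)^2 + (bh i)^2) ≤ lam := by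
    intro i hi
    simp only [hbv, hbh, hi, if_true]
    rcases eq_or_ne (m i) 0 with h0 | h0
    · obtain ⟨e1, e2⟩ := hzero i h0
      simp [e1, e2, hlam.le]
    · have hm2 : (m i)^2 = (Dv.mulVec w i)^2 + (Dh.mulVec w i)^2 :=
        Real.sq_sqrt (by positivity)
      have he : (lam * Dv.mulVec w i / m i)^2 + (lam * Dh.mulVec w i / m i)^2 = lam^2 := by
        field_simp
        linear_combination -hm2
      rw [he, Real.sqrt_sq hlam.le]
  have hmemb : Dvᵀ.mulVec bv + Dhᵀ.mulVec bh ∈ C := mem_C _ _ hfeasb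
  have hfb := hfa _ hmemb
  rw [f_T] at hfb
  have hsum2 : ∑ i, (bv i * Dv.mulVec w i + bh i * Dh.mulVec w i)
      = lam * ∑ i ∈ S, m i := by
    rw [Finset.mul_sum]
    rw [← Finset.sum_subset S.subset_univ (fun i _ hiS => by simp [hbv, hbh, hiS])]
    refine Finset.sum_congr rfl fun i hi => ?_
    simp only [hbv, hbh, hi, if_true]
    rcases eq_or_ne (m i) 0 with h0 | h0
    · obtain ⟨e1, e2⟩ := hzero i h0
      simp [e1, e2, h0]
    · have hm2 : (m i)^2 = (Dv.mulVec w i)^2 + (Dh.mulVec w i)^2 :=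
        Real.sq_sqrt (by positivity)
      field_simp
      linear_combination -hm2
  rw [hsum2] at hfb
  have hvw := hv w feas_w
  have hfv2 : f v = ∑ i, v i * w i := f_eq v
  rw [hfv2] at hfv
  have : lam * ∑ i ∈ S, m i < lam * ∑ i ∈ S, m i := lt_of_lt_of_le (hfb.trans hfv) hvw
  exact absurd this (lt_irrefl _)

/-- Proposition 2 (attainment part): for an index set S, if x* attains the primal infimum
p(S) and (α*, βv*, βh*) attains the dual supremum d(S), then α* = y − A x*. -/
theorem mptv_subproblem_dual_opt_is_residual (n : ℕ) (hn : 1 ≤ n) (y : Fin n → ℝ)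
    (A Dv Dh : Matrix (Fin n) (Fin n) ℝ) (lam : ℝ) (hlam : 0 < lam)
    (S : Finset (Fin n))
    (xstar : Fin n → ℝ)
    (hxfeas : ∀ i, i ∉ S → Dv.mulVec xstar i = 0 ∧ Dh.mulVec xstar i = 0)
    (hxmin : ∀ x : Fin n → ℝ,
      (∀ i, i ∉ S → Dv.mulVec x i = 0 ∧ Dh.mulVec x i = 0) →
      (1 / 2) * ∑ i, (y i - A.mulVec xstar i) ^ 2
          + lam * ∑ i ∈ S, Real.sqrt ((Dv.mulVec xstar i) ^ 2 + (Dh.mulVec xstar i) ^ 2)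
        ≤ (1 / 2) * ∑ i, (y i - A.mulVec x i) ^ 2
          + lam * ∑ i ∈ S, Real.sqrt ((Dv.mulVec x i) ^ 2 + (Dh.mulVec x i) ^ 2))
    (αstar βvstar βhstar : Fin n → ℝ)
    (hdfeas : Aᵀ.mulVec αstar = Dvᵀ.mulVec βvstar + Dhᵀ.mulVec βhstar
      ∧ ∀ i ∈ S, Real.sqrt ((βvstar i) ^ 2 + (βhstar i) ^ 2) ≤ lam)
    (hdmax : ∀ α βv βh : Fin n → ℝ,
      (Aᵀ.mulVec α = Dvᵀ.mulVec βv + Dhᵀ.mulVec βh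
        ∧ ∀ i ∈ S, Real.sqrt ((βv i) ^ 2 + (βh i) ^ 2) ≤ lam) →
      -(1 / 2) * ∑ i, (α i) ^ 2 + ∑ i, α i * y i
        ≤ -(1 / 2) * ∑ i, (αstar i) ^ 2 + ∑ i, αstar i * y i) :
    αstar = y - A.mulVec xstar := by
  classical
  set a : Fin n → ℝ := A.mulVec xstar with ha
  set r : Fin n → ℝ := fun i => y i - a i with hr
  set Sig : ℝ := ∑ i ∈ S, Real.sqrt ((Dv.mulVec xstar i) ^ 2 + (Dh.mulVec xstar i) ^ 2) with hSig
  -- Step 1: complementary slackness inequality  lam * Sig ≤ ∑ r i * a i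
  have F1 : lam * Sig ≤ ∑ i, r i * a i := by
    apply my_lim_aux (c := (∑ i, (a i)^2)/1)
    intro t ht0 ht1
    have hfeas' : ∀ i, i ∉ S → Dv.mulVec ((1-t) • xstar) i = 0 ∧ Dh.mulVec ((1-t) • xstar) i = 0 := by
      intro i hi
      rw [mulVec_smul, mulVec_smul]
      obtain ⟨h1, h2⟩ := hxfeas i hi
      constructor <;> simp [Pi.smul_apply, h1, h2]
    have h := hxmin ((1-t) • xstar) hfeas'
    have h1t : (0:ℝ) ≤ 1 - t := by linarith
    have e1 : ∀ M : Matrix (Fin n) (Fin n) ℝ, ∀ i, M.mulVec ((1-t) • xstar) i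
        = (1-t) * M.mulVec xstar i := by
      intro M i; rw [mulVec_smul]; rfl
    have e2 : ∑ i, (y i - A.mulVec ((1-t) • xstar) i)^2
        = ∑ i, (y i - a i)^2 + t * (2 * ∑ i, r i * a i) + t^2 * ∑ i, (a i)^2 := by
      rw [Finset.mul_sum, Finset.mul_sum, Finset.mul_sum, ← Finset.sum_add_distrib,
        ← Finset.sum_add_distrib]
      refine Finset.sum_congr rfl fun i _ => ?_
      rw [e1 A i]
      simp only [hr, ha]
      ring
    have e3 : ∑ i ∈ S, Real.sqrt ((Dv.mulVec ((1-t) • xstar) i)^2 + (Dh.mulVec ((1-t) • xstar) i)^2)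
        = (1-t) * Sig := by
      rw [hSig, Finset.mul_sum]
      refine Finset.sum_congr rfl fun i _ => ?_
      rw [e1 Dv i, e1 Dh i, my_sqrt_smul _ _ _ h1t]
    rw [e2, e3] at h
    have hr2 : ∑ i, (y i - A.mulVec xstar i)^2 = ∑ i, (y i - a i)^2 := rfl
    rw [hr2] at h
    have hM : (0:ℝ) ≤ ∑ i, (a i)^2 := Finset.sum_nonneg fun i _ => sq_nonneg _
    nlinarith [h, ht0, mul_nonneg (mul_nonneg ht0.le ht0.le) hM,
      mul_pos ht0 ht0]
  -- Step 2: directional optimality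
  have F2 : ∀ w : Fin n → ℝ, (∀ i, i ∉ S → Dv.mulVec w i = 0 ∧ Dh.mulVec w i = 0) →
      ∑ i, r i * A.mulVec w i
        ≤ lam * ∑ i ∈ S, Real.sqrt ((Dv.mulVec w i)^2 + (Dh.mulVec w i)^2) := by
    intro w hw
    apply my_lim_aux (c := (∑ i, (A.mulVec w i)^2)/1)
    intro t ht0 ht1
    have hfeas' : ∀ i, i ∉ S → Dv.mulVec (xstar + t • w) i = 0 ∧ Dh.mulVec (xstar + t • w) i = 0 := by
      intro i hi
      rw [mulVec_add, mulVec_add, mulVec_smul, mulVec_smul]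
      obtain ⟨h1, h2⟩ := hxfeas i hi
      obtain ⟨h3, h4⟩ := hw i hi
      constructor <;> simp [Pi.add_apply, Pi.smul_apply, h1, h2, h3, h4]
    have h := hxmin (xstar + t • w) hfeas'
    have e1 : ∀ M : Matrix (Fin n) (Fin n) ℝ, ∀ i, M.mulVec (xstar + t • w) i
        = M.mulVec xstar i + t * M.mulVec w i := by
      intro M i; rw [mulVec_add, mulVec_smul]; rfl
    have e2 : ∑ i, (y i - A.mulVec (xstar + t • w) i)^2
        = ∑ i, (y i - a i)^2 - t * (2 * ∑ i, r i * A.mulVec w i)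
          + t^2 * ∑ i, (A.mulVec w i)^2 := by
      rw [Finset.mul_sum, Finset.mul_sum, Finset.mul_sum, ← Finset.sum_sub_distrib,
        ← Finset.sum_add_distrib]
      refine Finset.sum_congr rfl fun i _ => ?_
      rw [e1 A i]
      simp only [hr, ha]
      ring
    have e3 : ∑ i ∈ S, Real.sqrt ((Dv.mulVec (xstar + t • w) i)^2 + (Dh.mulVec (xstar + t • w) i)^2)
        ≤ Sig + t * ∑ i ∈ S, Real.sqrt ((Dv.mulVec w i)^2 + (Dh.mulVec w i)^2) := by
      rw [hSig, Finset.mul_sum, ← Finset.sum_add_distrib]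
      refine Finset.sum_le_sum fun i _ => ?_
      rw [e1 Dv i, e1 Dh i]
      calc Real.sqrt ((Dv.mulVec xstar i + t * Dv.mulVec w i)^2
            + (Dh.mulVec xstar i + t * Dh.mulVec w i)^2)
          ≤ Real.sqrt ((Dv.mulVec xstar i)^2 + (Dh.mulVec xstar i)^2)
            + Real.sqrt ((t * Dv.mulVec w i)^2 + (t * Dh.mulVec w i)^2) := my_sqrt_tri _ _ _ _
        _ = _ := by rw [my_sqrt_smul _ _ _ ht0.le]
    have hr2 : ∑ i, (y i - A.mulVec xstar i)^2 = ∑ i, (y i - a i)^2 := rfl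
    rw [hr2, e2] at h
    have e3' : lam * ∑ i ∈ S, Real.sqrt ((Dv.mulVec (xstar + t • w) i)^2
          + (Dh.mulVec (xstar + t • w) i)^2)
        ≤ lam * (Sig + t * ∑ i ∈ S, Real.sqrt ((Dv.mulVec w i)^2 + (Dh.mulVec w i)^2)) :=
      mul_le_mul_of_nonneg_left e3 hlam.le
    have h' := h.trans (add_le_add_right e3' _)
    have hM : (0:ℝ) ≤ ∑ i, (A.mulVec w i)^2 := Finset.sum_nonneg fun i _ => sq_nonneg _
    nlinarith [h', ht0, mul_nonneg (mul_nonneg ht0.le ht0.le) hM, mul_pos ht0 ht0]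
  -- Step 3: dual certificate for the residual
  obtain ⟨bv, bh, hcert, hbfeas⟩ := my_dual_cert Dv Dh hlam S (Aᵀ.mulVec r) (by
    intro w hw
    rw [my_dot A r w]
    exact F2 w hw)
  -- Step 4: dual optimality applied to r
  have F4 := hdmax r bv bh ⟨hcert, hbfeas⟩
  -- Step 5: pairing bound for αstar
  have F5 : ∑ i, αstar i * a i ≤ lam * Sig := by
    have hp1 : ∑ i, (Aᵀ.mulVec αstar) i * xstar i = ∑ i, αstar i * a i := my_dot A αstar xstar
    rw [hdfeas.1] at hp1
    have hp2 : ∑ i, (Dvᵀ.mulVec βvstar + Dhᵀ.mulVec βhstar) i * xstar i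
        = ∑ i, (βvstar i * Dv.mulVec xstar i + βhstar i * Dh.mulVec xstar i) := by
      calc ∑ i, (Dvᵀ.mulVec βvstar + Dhᵀ.mulVec βhstar) i * xstar i
          = ∑ i, ((Dvᵀ.mulVec βvstar) i * xstar i + (Dhᵀ.mulVec βhstar) i * xstar i) :=
            Finset.sum_congr rfl fun i _ => by simp [add_mul]
        _ = (∑ i, (Dvᵀ.mulVec βvstar) i * xstar i) + ∑ i, (Dhᵀ.mulVec βhstar) i * xstar i :=
            Finset.sum_add_distrib
        _ = (∑ i, βvstar i * Dv.mulVec xstar i) + ∑ i, βhstar i * Dh.mulVec xstar i := by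
            rw [my_dot, my_dot]
        _ = _ := Finset.sum_add_distrib.symm
    have hp3 : ∑ i, (βvstar i * Dv.mulVec xstar i + βhstar i * Dh.mulVec xstar i)
        = ∑ i ∈ S, (βvstar i * Dv.mulVec xstar i + βhstar i * Dh.mulVec xstar i) := by
      symm
      refine Finset.sum_subset S.subset_univ fun i _ hiS => ?_
      obtain ⟨h1, h2⟩ := hxfeas i hiS
      rw [h1, h2]; ring
    have hp4 : ∑ i ∈ S, (βvstar i * Dv.mulVec xstar i + βhstar i * Dh.mulVec xstar i)
        ≤ lam * Sig := by
      rw [hSig, Finset.mul_sum]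
      refine Finset.sum_le_sum fun i hi => ?_
      calc βvstar i * Dv.mulVec xstar i + βhstar i * Dh.mulVec xstar i
          ≤ Real.sqrt ((βvstar i)^2 + (βhstar i)^2)
            * Real.sqrt ((Dv.mulVec xstar i)^2 + (Dh.mulVec xstar i)^2) := my_cs2 _ _ _ _
        _ ≤ lam * Real.sqrt ((Dv.mulVec xstar i)^2 + (Dh.mulVec xstar i)^2) :=
            mul_le_mul_of_nonneg_right (hdfeas.2 i hi) (Real.sqrt_nonneg _)
    calc ∑ i, αstar i * a i = ∑ i, (Dvᵀ.mulVec βvstar + Dhᵀ.mulVec βhstar) i * xstar i := hp1.symm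
      _ = _ := hp2
      _ = _ := hp3
      _ ≤ lam * Sig := hp4
  -- Final algebra
  have E1 : ∑ i, (αstar i - r i)^2
      = ∑ i, (αstar i)^2 - 2 * ∑ i, (αstar i * r i) + ∑ i, (r i)^2 := by
    rw [Finset.mul_sum, ← Finset.sum_sub_distrib, ← Finset.sum_add_distrib]
    exact Finset.sum_congr rfl fun i _ => by ring
  have E2 : ∑ i, (αstar i * r i) = ∑ i, αstar i * y i - ∑ i, αstar i * a i := by
    rw [← Finset.sum_sub_distrib]
    exact Finset.sum_congr rfl fun i _ => by rw [hr]; ring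
  have E3 : ∑ i, r i * y i = ∑ i, (r i)^2 + ∑ i, r i * a i := by
    rw [← Finset.sum_add_distrib]
    exact Finset.sum_congr rfl fun i _ => by rw [hr]; ring
  have Hsq : ∑ i, (αstar i - r i)^2 ≤ 0 := by
    have hr3 : ∑ i, (r i)^2 = ∑ i, (r i)^2 := rfl
    linarith [F1, F4, F5, E1, E2, E3]
  have Hzero : ∀ i ∈ Finset.univ, (αstar i - r i)^2 = 0 := by
    rw [← Finset.sum_eq_zero_iff_of_nonneg (fun i _ => sq_nonneg (αstar i - r i))]
    exact le_antisymm Hsq (Finset.sum_nonneg fun i _ => sq_nonneg _)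
  funext i
  have := Hzero i (Finset.mem_univ i)
  have h0 : αstar i - r i = 0 := by
    nlinarith [this]
  have : αstar i = r i := by linarith
  simpa [hr, ha] using this
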